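/- A prime p can be written as p = a² + 9b² with integers a, b if and only if p ≡ j² (mod 36) for some j ∈ {1, 5, 7}. -/

import Mathlib

theorem stmt_6 (p : ℕ) (hp : p.Prime) :
    (∃ a b : ℤ, (p : ℤ) = a ^ 2 + 9 * b ^ 2) ↔
    (∃ j ∈ ({1, 5, 7} : Finset ℕ), p % 36 = j ^ 2 % 36) := by
  constructor
  · rintro ⟨a, b, hab⟩
    -- reduce mod 12
    have h12 : (p : ZMod 12) = (a : ZMod 12) ^ 2 + 9 * (b : ZMod 12) ^ 2 := by
      have := congrArg (fun z : ℤ => (z : ZMod 12)) hab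
      push_cast at this
      simpa using this
    have key : ∀ x y : ZMod 12, (x ^ 2 + 9 * y ^ 2).val = 0 ∨ (x ^ 2 + 9 * y ^ 2).val = 1 ∨
        (x ^ 2 + 9 * y ^ 2).val = 4 ∨ (x ^ 2 + 9 * y ^ 2).val = 6 ∨
        (x ^ 2 + 9 * y ^ 2).val = 9 ∨ (x ^ 2 + 9 * y ^ 2).val = 10 := by decide
    have hval : (p : ZMod 12).val = p % 12 := ZMod.val_natCast 12 p
    have hk := key (a : ZMod 12) (b : ZMod 12)
    rw [← h12, hval] at hk
    -- rule out non-unit residues using primality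
    have hp2 : p % 12 = 1 := by
      rcases hk with h | h | h | h | h | h
      · exact absurd ((Nat.Prime.eq_one_or_self_of_dvd hp 2 (by omega)).resolve_left (by norm_num)) (by omega)
      · exact h
      · exact absurd ((Nat.Prime.eq_one_or_self_of_dvd hp 2 (by omega)).resolve_left (by norm_num)) (by omega)
      · exact absurd ((Nat.Prime.eq_one_or_self_of_dvd hp 2 (by omega)).resolve_left (by norm_num)) (by omega)
      · exact absurd ((Nat.Prime.eq_one_or_self_of_dvd hp 3 (by omega)).resolve_left (by norm_num)) (by omega)
      · exact absurd ((Nat.Prime.eq_one_or_self_of_dvd hp 2 (by omega)).resolve_left (by norm_num)) (by omega)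
    have h36 : p % 36 = 1 ∨ p % 36 = 13 ∨ p % 36 = 25 := by omega
    rcases h36 with h | h | h
    · exact ⟨1, by norm_num, by omega⟩
    · exact ⟨7, by norm_num, by omega⟩
    · exact ⟨5, by norm_num, by omega⟩
  · rintro ⟨j, hj, hmod⟩
    fin_cases hj <;> norm_num at hmod
    all_goals {
      have hp4 : p % 4 ≠ 3 := by omega
      have hp3 : p % 3 = 1 := by omega
      haveI : Fact p.Prime := ⟨hp⟩
      obtain ⟨a, b, hab⟩ := Nat.Prime.sq_add_sq hp4
      have hcast : (a : ZMod 3) ^ 2 + (b : ZMod 3) ^ 2 = 1 := by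
        have h1 := congrArg (fun n : ℕ => (n : ZMod 3)) hab
        push_cast at h1
        have h2 : (p : ZMod 3) = ((1 : ℕ) : ZMod 3) :=
          (ZMod.natCast_eq_natCast_iff p 1 3).mpr (by unfold Nat.ModEq; omega)
        rw [h1, h2]; norm_num
      have hd : ∀ x y : ZMod 3, x ^ 2 + y ^ 2 = 1 → x = 0 ∨ y = 0 := by decide
      rcases hd _ _ hcast with h | h
      · obtain ⟨c, hc⟩ := (ZMod.natCast_eq_zero_iff a 3).mp h
        refine ⟨(b : ℤ), (c : ℤ), ?_⟩
        have : (3 * c) ^ 2 + b ^ 2 = p := by rw [← hc]; exact hab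
        push_cast [← this]; ring
      · obtain ⟨c, hc⟩ := (ZMod.natCast_eq_zero_iff b 3).mp h
        refine ⟨(a : ℤ), (c : ℤ), ?_⟩
        have : a ^ 2 + (3 * c) ^ 2 = p := by rw [← hc]; exact hab
        push_cast [← this]; ring
    }
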